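/- arXiv:1805.08938 — 5 statements merged into one kernel-verified Lean document; each statement's English description precedes it below -/
import Mathlib

section
/- For any finite set A of positive integers with |A| ≥ 2 and any positive integer m, the m-fold sumset of the restricted sumset satisfies |m·Σ*A| ≥ (1/2)·|A|²·m. -/
open Pointwise

/-- The restricted sumset `Σ* A` of a finite set of integers. -/
def restrictedSumset (A : Finset ℤ) : Finset ℤ :=
  A.powerset.image (fun B => B.sum id)

lemma restrictedSumset_mono {A B : Finset ℤ} (h : A ⊆ B) :
    restrictedSumset A ⊆ restrictedSumset B :=
  Finset.image_subset_image (Finset.powerset_mono.2 h)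

lemma card_restrictedSumset (A : Finset ℤ) (hpos : ∀ a ∈ A, 0 < a) :
    A.card * (A.card + 1) + 2 ≤ 2 * (restrictedSumset A).card := by
  induction A using Finset.strongInduction with
  | _ A ih =>
    rcases A.eq_empty_or_nonempty with rfl | hne
    · simp [restrictedSumset]
    · set a := A.max' hne with ha
      have hamem : a ∈ A := A.max'_mem hne
      set A' := A.erase a with hA'
      have hsub : A' ⊂ A := Finset.erase_ssubset hamem
      have hpos' : ∀ x ∈ A', 0 < x := fun x hx => hpos x (Finset.mem_of_mem_erase hx)
      have hcard : A'.card + 1 = A.card := Finset.card_erase_add_one hamem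
      -- the new sums
      set T : Finset ℤ := insert (A.sum id) (A'.image (fun x => A.sum id - x)) with hT
      have hTsub : T ⊆ restrictedSumset A := by
        intro t ht
        rw [hT, Finset.mem_insert] at ht
        rcases ht with rfl | ht
        · exact Finset.mem_image.2 ⟨A, Finset.mem_powerset.2 le_rfl, rfl⟩
        · obtain ⟨x, hx, rfl⟩ := Finset.mem_image.1 ht
          have hxA : x ∈ A := Finset.mem_of_mem_erase hx
          refine Finset.mem_image.2 ⟨A.erase x, Finset.mem_powerset.2 (Finset.erase_subset _ _), ?_⟩
          have := Finset.sum_erase_add A id hxA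
          simp only [id] at this ⊢
          omega
      have hA'sub : restrictedSumset A' ⊆ restrictedSumset A :=
        restrictedSumset_mono (Finset.erase_subset _ _)
      -- elements of restrictedSumset A' are at most A'.sum id
      have hle : ∀ s ∈ restrictedSumset A', s ≤ A'.sum id := by
        intro s hs
        obtain ⟨B, hB, rfl⟩ := Finset.mem_image.1 hs
        exact Finset.sum_le_sum_of_subset_of_nonneg (Finset.mem_powerset.1 hB)
          (fun x hx _ => (hpos' x hx).le)
      -- elements of T are greater than A'.sum id
      have hApos : 0 < a := hpos a hamem
      have hsum : A'.sum id + a = A.sum id := by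
        have := Finset.sum_erase_add A id hamem
        simpa using this
      have hgt : ∀ t ∈ T, A'.sum id < t := by
        intro t ht
        rw [hT, Finset.mem_insert] at ht
        rcases ht with rfl | ht
        · omega
        · obtain ⟨x, hx, rfl⟩ := Finset.mem_image.1 ht
          have hxa : x < a := lt_of_le_of_ne (A.le_max' x (Finset.mem_of_mem_erase hx))
            (Finset.ne_of_mem_erase hx)
          omega
      have hdisj : Disjoint (restrictedSumset A') T := by
        rw [Finset.disjoint_left]
        intro s hs hsT
        exact absurd (hle s hs) (not_le.2 (hgt s hsT))
      have hTcard : T.card = A.card := by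
        rw [hT, Finset.card_insert_of_notMem, Finset.card_image_of_injective _
          (fun x y h => by omega)]
        · omega
        · intro h
          obtain ⟨x, hx, hxe⟩ := Finset.mem_image.1 h
          have := hpos' x hx
          omega
      have hunion : restrictedSumset A' ∪ T ⊆ restrictedSumset A :=
        Finset.union_subset hA'sub hTsub
      have hcard2 : (restrictedSumset A').card + A.card ≤ (restrictedSumset A).card := by
        calc (restrictedSumset A').card + A.card
            = (restrictedSumset A' ∪ T).card := by
              rw [Finset.card_union_of_disjoint hdisj, hTcard]
          _ ≤ (restrictedSumset A).card := Finset.card_le_card hunion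
      have hih := ih A' hsub hpos'
      nlinarith [hih, hcard2, hcard]

lemma card_nsmul_lower (S : Finset ℤ) (hS : S.Nonempty) (m : ℕ) (hm : 1 ≤ m) :
    m * S.card + 1 ≤ (m • S).card + m := by
  induction m, hm using Nat.le_induction with
  | base => simp [one_nsmul]
  | succ n hn ihn =>
    have h1 : 1 ≤ S.card := Finset.card_pos.2 hS
    have h3 : n ≤ n * S.card := Nat.le_mul_of_pos_right n h1
    have hnS : (n • S).Nonempty := by
      rw [← Finset.card_pos]
      omega
    have hcd : S.card + (n • S).card - 1 ≤ (S + n • S).card :=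
      cauchy_davenport_add_of_linearOrder_isCancelAdd hS hnS
    have heq : (n + 1) • S = S + n • S := succ_nsmul' S n
    rw [heq, add_one_mul]
    have h2 : 1 ≤ (n • S).card := Finset.card_pos.2 hnS
    omega

/-- For a finite set `A` of positive integers with `|A| ≥ 2` and any `m ≥ 1`, the `m`-fold
sumset of the restricted sumset satisfies `|m Σ* A| ≥ |A|² m / 2`. -/
theorem msmul_restrictedSumset_card (A : Finset ℤ) (hpos : ∀ a ∈ A, 0 < a)
    (hA : 2 ≤ A.card) (m : ℕ) (hm : 1 ≤ m) :
    A.card ^ 2 * m ≤ 2 * (m • restrictedSumset A).card := by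
  set S := restrictedSumset A with hS
  have hSne : S.Nonempty :=
    ⟨(0 : ℤ), Finset.mem_image.2 ⟨∅, Finset.mem_powerset.2 (Finset.empty_subset _), rfl⟩⟩
  have h1 := card_restrictedSumset A hpos
  have h2 := card_nsmul_lower S hSne m hm
  rw [← hS] at h1
  nlinarith [Nat.mul_le_mul_left m h1, h2, hA, hm]
end

section
/- Let A be a Sidon set of positive integers and let X ⊆ A with |X| ≤ (1/2)|A| and |Σ*X| ≤ C(⌊|A|/2⌋, 2). Then there exist two distinct elements a₁, a₂ ∈ A \ X such that, setting X' = X ∪ {a₁, a₂}, one has |Σ*X'| ≥ (3/2)|Σ*X|. -/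
/-- `A` is a Sidon set: all sums of two (not necessarily distinct) elements are determined
by the unordered pair. -/
def IsSidonSet (A : Finset ℤ) : Prop :=
  ∀ a ∈ A, ∀ b ∈ A, ∀ c ∈ A, ∀ d ∈ A, a + b = c + d → (a = c ∧ b = d) ∨ (a = d ∧ b = c)

lemma mem_restrictedSumset {A : Finset ℤ} {x : ℤ} :
    x ∈ restrictedSumset A ↔ ∃ B ⊆ A, B.sum id = x := by
  simp [restrictedSumset, Finset.mem_image, Finset.mem_powerset]

/-- Growing step for small restricted sumsets: if `A` is Sidon, `X ⊆ A` with
`|X| ≤ |A|/2` and `|Σ*X| ≤ C(⌊|A|/2⌋, 2)`, then two new elements of `A` can be added to `X`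
so that the restricted sumset grows by a factor of `3/2`. -/
theorem sidon_small_step (A X : Finset ℤ) (hpos : ∀ a ∈ A, 0 < a) (hSidon : IsSidonSet A)
    (hXA : X ⊆ A) (hXcard : 2 * X.card ≤ A.card)
    (hsmall : (restrictedSumset X).card ≤ (A.card / 2).choose 2) :
    ∃ a₁ ∈ A \ X, ∃ a₂ ∈ A \ X, a₁ ≠ a₂ ∧
      3 * (restrictedSumset X).card ≤ 2 * (restrictedSumset (insert a₁ (insert a₂ X))).card := by
  classical
  set S := restrictedSumset X with hSdef
  set s := S.card with hsdef
  have h0S : (0:ℤ) ∈ S := mem_restrictedSumset.2 ⟨∅, Finset.empty_subset _, by simp⟩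
  have hs1 : 1 ≤ s := Finset.card_pos.2 ⟨0, h0S⟩
  set D := A \ X with hDdef
  have hDA : D ⊆ A := Finset.sdiff_subset
  have hm : A.card / 2 ≤ D.card := by
    have h1 : D.card = A.card - X.card := Finset.card_sdiff_of_subset hXA
    have h2 : X.card ≤ A.card := Finset.card_le_card hXA
    omega
  -- the set of pairwise sums of distinct elements of D
  set T := (D.powersetCard 2).image (fun B => B.sum id) with hTdef
  have hTcard : T.card = D.card.choose 2 := by
    rw [hTdef, Finset.card_image_of_injOn, Finset.card_powersetCard]
    intro B1 h1 B2 h2 hsum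
    rw [Finset.mem_coe, Finset.mem_powersetCard] at h1 h2
    obtain ⟨hB1D, hB1c⟩ := h1
    obtain ⟨hB2D, hB2c⟩ := h2
    obtain ⟨a, b, hab, rfl⟩ := Finset.card_eq_two.1 hB1c
    obtain ⟨c, d, hcd, rfl⟩ := Finset.card_eq_two.1 hB2c
    have hsum' : a + b = c + d := by
      simpa [Finset.sum_pair hab, Finset.sum_pair hcd] using hsum
    have haA : a ∈ A := hDA (hB1D (by simp))
    have hbA : b ∈ A := hDA (hB1D (by simp))
    have hcA : c ∈ A := hDA (hB2D (by simp))
    have hdA : d ∈ A := hDA (hB2D (by simp))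
    rcases hSidon a haA b hbA c hcA d hdA hsum' with ⟨rfl, rfl⟩ | ⟨rfl, rfl⟩
    · rfl
    · exact Finset.pair_comm a b
  have hsT : s ≤ T.card := by
    rw [hTcard]
    exact hsmall.trans (Nat.choose_le_choose 2 hm)
  -- counting pairs with given positive difference
  set Q := (S ×ˢ S).filter (fun p => p.2 < p.1) with hQdef
  set Q' := (S ×ˢ S).filter (fun p => p.1 < p.2) with hQ'def
  have hQQ' : Q.card ≤ Q'.card := by
    apply Finset.card_le_card_of_injOn (fun p => (p.2, p.1))
    · intro p hp
      simp only [hQdef, hQ'def, Finset.mem_coe, Finset.mem_filter, Finset.mem_product] at hp ⊢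
      exact ⟨⟨hp.1.2, hp.1.1⟩, hp.2⟩
    · intro p _ q _ h
      exact Prod.ext (congrArg Prod.snd h) (congrArg Prod.fst h)
  have hQd : s ≤ ((S ×ˢ S).filter (fun p => p.1 = p.2)).card := by
    apply Finset.card_le_card_of_injOn (fun x => (x, x))
    · intro x hx
      simp [Finset.mem_filter, Finset.mem_product, Finset.mem_coe.1 hx]
    · intro x _ y _ h
      exact congrArg Prod.fst h
  have hQbound : 2 * Q.card ≤ s * s - s := by
    have hdisj : Disjoint Q Q' := by
      rw [Finset.disjoint_left]
      intro p hp hp'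
      simp only [hQdef, hQ'def, Finset.mem_filter] at hp hp'
      exact absurd hp'.2 (not_lt.2 hp.2.le)
    have hsub : Q ∪ Q' ⊆ (S ×ˢ S) \ ((S ×ˢ S).filter (fun p => p.1 = p.2)) := by
      intro p hp
      rcases Finset.mem_union.1 hp with hp | hp <;>
        simp only [hQdef, hQ'def, Finset.mem_filter] at hp <;>
        · rw [Finset.mem_sdiff, Finset.mem_filter]
          refine ⟨hp.1, ?_⟩
          intro h
          exact absurd h.2 (by omega)
    have h1 : Q.card + Q'.card ≤ ((S ×ˢ S) \ ((S ×ˢ S).filter (fun p => p.1 = p.2))).card := by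
      rw [← Finset.card_union_of_disjoint hdisj]
      exact Finset.card_le_card hsub
    have h2 : ((S ×ˢ S) \ ((S ×ˢ S).filter (fun p => p.1 = p.2))).card
        = (S ×ˢ S).card - ((S ×ˢ S).filter (fun p => p.1 = p.2)).card :=
      Finset.card_sdiff_of_subset (Finset.filter_subset _ _)
    have h3 : (S ×ˢ S).card = s * s := by rw [Finset.card_product]
    omega
  -- fiberwise count over T
  have hfib : ∑ t ∈ T, (Q.filter (fun p => p.1 - p.2 = t)).card ≤ Q.card := by
    have heq : Q.card = ∑ t ∈ T ∪ Q.image (fun p => p.1 - p.2),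
        (Q.filter (fun p => p.1 - p.2 = t)).card :=
      Finset.card_eq_sum_card_fiberwise
        (fun p hp => Finset.mem_union_right _ (Finset.mem_image_of_mem _ hp))
    rw [heq]
    exact Finset.sum_le_sum_of_subset Finset.subset_union_left
  -- pick a minimizing t₀ ∈ T
  have hTne : T.Nonempty := Finset.card_pos.1 (lt_of_lt_of_le hs1 hsT)
  obtain ⟨t₀, ht₀T, hmin⟩ :=
    T.exists_min_image (fun t => (Q.filter (fun p => p.1 - p.2 = t)).card) hTne
  set r := (Q.filter (fun p => p.1 - p.2 = t₀)).card with hrdef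
  have hsum_ge : T.card * r ≤ ∑ t ∈ T, (Q.filter (fun p => p.1 - p.2 = t)).card := by
    have := Finset.card_nsmul_le_sum T _ r hmin
    simpa [smul_eq_mul] using this
  have h2r : 2 * r + 1 ≤ s := by
    have hA1 : s * r ≤ T.card * r := Nat.mul_le_mul_right r hsT
    have hA2 : 2 * (s * r) ≤ s * s - s := by
      have := hsum_ge.trans hfib
      omega
    have hfac : s * s - s = s * (s - 1) := by
      rw [Nat.mul_sub, Nat.mul_one]
    have hA3 : s * (2 * r) ≤ s * (s - 1) := by
      have h2sr : s * (2 * r) = 2 * (s * r) := by ring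
      rw [h2sr, ← hfac]
      exact hA2
    have hA4 : 2 * r ≤ s - 1 := Nat.le_of_mul_le_mul_left hA3 (by omega)
    omega
  -- extract a₁, a₂
  obtain ⟨B, hB, hBsum⟩ := Finset.mem_image.1 ht₀T
  rw [Finset.mem_powersetCard] at hB
  obtain ⟨a₁, a₂, hne, rfl⟩ := Finset.card_eq_two.1 hB.2
  have ha₁D : a₁ ∈ D := hB.1 (by simp)
  have ha₂D : a₂ ∈ D := hB.1 (by simp)
  have ht₀ : t₀ = a₁ + a₂ := by
    rw [← hBsum, Finset.sum_pair hne]; rfl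
  have ht₀pos : 0 < t₀ := by
    rw [ht₀]
    have := hpos a₁ (hDA ha₁D)
    have := hpos a₂ (hDA ha₂D)
    omega
  have ha₁X : a₁ ∉ X := (Finset.mem_sdiff.1 ha₁D).2
  have ha₂X : a₂ ∉ X := (Finset.mem_sdiff.1 ha₂D).2
  refine ⟨a₁, ha₁D, a₂, ha₂D, hne, ?_⟩
  -- shifted copy
  set S' := S.image (fun x => x + t₀) with hS'def
  have hS'card : S'.card = s := Finset.card_image_of_injective S (add_left_injective t₀)
  have hsub : S ∪ S' ⊆ restrictedSumset (insert a₁ (insert a₂ X)) := by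
    intro x hx
    rcases Finset.mem_union.1 hx with hx | hx
    · obtain ⟨B, hBX, rfl⟩ := mem_restrictedSumset.1 hx
      exact mem_restrictedSumset.2 ⟨B, hBX.trans (by
        intro y hy; exact Finset.mem_insert_of_mem (Finset.mem_insert_of_mem hy)), rfl⟩
    · obtain ⟨y, hyS, rfl⟩ := Finset.mem_image.1 hx
      obtain ⟨B, hBX, rfl⟩ := mem_restrictedSumset.1 hyS
      have ha₂B : a₂ ∉ B := fun h => ha₂X (hBX h)
      have ha₁B : a₁ ∉ insert a₂ B := by
        simp only [Finset.mem_insert]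
        rintro (rfl | h)
        · exact hne rfl
        · exact ha₁X (hBX h)
      refine mem_restrictedSumset.2 ⟨insert a₁ (insert a₂ B), ?_, ?_⟩
      · intro y hy
        simp only [Finset.mem_insert] at hy ⊢
        rcases hy with rfl | rfl | h
        · exact Or.inl rfl
        · exact Or.inr (Or.inl rfl)
        · exact Or.inr (Or.inr (hBX h))
      · rw [Finset.sum_insert ha₁B, Finset.sum_insert ha₂B, ht₀]
        simp only [id]
        ring
  have hinter : (S ∩ S').card ≤ r := by
    rw [hrdef]
    apply Finset.card_le_card_of_injOn (fun x => (x, x - t₀))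
    · intro x hx
      obtain ⟨hxS, hxS'⟩ := Finset.mem_inter.1 hx
      obtain ⟨y, hyS, hyx⟩ := Finset.mem_image.1 hxS'
      have hy : x - t₀ = y := by omega
      simp only [hQdef, Finset.mem_coe, Finset.mem_filter, Finset.mem_product]
      refine ⟨⟨⟨hxS, ?_⟩, ?_⟩, ?_⟩
      · rw [hy]; exact hyS
      · omega
      · omega
    · intro x _ y _ h
      exact congrArg Prod.fst h
  have hUcard : (S ∪ S').card + (S ∩ S').card = s + s := by
    rw [Finset.card_union_add_card_inter, hS'card]
  have hN : (S ∪ S').card ≤ (restrictedSumset (insert a₁ (insert a₂ X))).card :=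
    Finset.card_le_card hsub
  omega
end

section
/- There exists a constant c > 0 such that for every finite Sidon set A of positive integers, |Σ*A| ≥ c·|A|³. -/
set_option maxRecDepth 4000 in
private lemma sidon_key (A : Finset ℤ) (hpos : ∀ a ∈ A, 0 < a) (hsidon : IsSidonSet A) :
    A.card ^ 3 ≤ 256 * (restrictedSumset A).card := by
  classical
  set n := A.card with hn
  have hone : 1 ≤ (restrictedSumset A).card := by
    apply Finset.card_pos.mpr
    exact ⟨0, Finset.mem_image.mpr ⟨∅, Finset.mem_powerset.mpr (Finset.empty_subset _), rfl⟩⟩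
  by_cases hn3 : n ≤ 3
  · have : n ^ 3 ≤ 27 := le_trans (Nat.pow_le_pow_left hn3 3) (by norm_num)
    omega
  push_neg at hn3
  -- main case : n ≥ 4
  set l := A.sort (· ≤ ·) with hldef
  set m := n / 2 with hm
  set t := l.take m with ht
  set d := l.drop m with hd
  set L := t.toFinset with hL
  set K := d.length with hK
  have hlen : l.length = n := Finset.length_sort _
  have hnodup : l.Nodup := Finset.sort_nodup _ _
  have hsorted : l.Pairwise (· < ·) := List.sortedLT_iff_pairwise.mp (Finset.sortedLT_sort A)
  have htd : t ++ d = l := List.take_append_drop m l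
  have hlt : ∀ x ∈ t, ∀ y ∈ d, x < y := by
    have h2 := hsorted
    rw [← htd] at h2
    exact (List.pairwise_append.mp h2).2.2
  have hmemA : ∀ x ∈ l, x ∈ A := fun x hx => (Finset.mem_sort _).mp hx
  have hLsub : L ⊆ A := fun x hx => hmemA x (List.mem_of_mem_take (List.mem_toFinset.mp hx))
  have hdA : ∀ x ∈ d, x ∈ A := fun x hx => hmemA x (List.mem_of_mem_drop hx)
  have hLt : ∀ x ∈ L, x ∈ t := fun x hx => List.mem_toFinset.mp hx
  have hLcard : L.card = m := by
    rw [hL, List.toFinset_card_of_nodup (List.Nodup.sublist (List.take_sublist m l) hnodup),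
      List.length_take, hlen]
    omega
  have hdnodup : d.Nodup := List.Nodup.sublist (List.drop_sublist m l) hnodup
  have hKval : K = n - m := by rw [hK, hd, List.length_drop, hlen]
  set f : ℕ × Finset ℤ → ℤ := fun x => (d.drop (K - x.1)).sum + x.2.sum id with hf
  set D := (Finset.range (K + 1)) ×ˢ (L.powersetCard 2) with hD
  -- membership of the image in the restricted sumset
  have himg : D.image f ⊆ restrictedSumset A := by
    intro v hv
    obtain ⟨⟨k, P⟩, hkP, rfl⟩ := Finset.mem_image.mp hv
    obtain ⟨hk, hP⟩ := Finset.mem_product.mp hkP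
    rw [Finset.mem_powersetCard] at hP
    obtain ⟨hPL, hP2⟩ := hP
    have hdknd : (d.drop (K - k)).Nodup :=
      List.Nodup.sublist (List.drop_sublist _ d) hdnodup
    have hdisj : Disjoint P (d.drop (K - k)).toFinset := by
      rw [Finset.disjoint_left]
      intro x hxP hxd
      exact absurd (hlt x (hLt x (hPL hxP)) x
        (List.mem_of_mem_drop (List.mem_toFinset.mp hxd))) (lt_irrefl x)
    refine Finset.mem_image.mpr ⟨P ∪ (d.drop (K - k)).toFinset,
      Finset.mem_powerset.mpr ?_, ?_⟩
    · intro x hx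
      rcases Finset.mem_union.mp hx with h | h
      · exact hLsub (hPL h)
      · exact hdA x (List.mem_of_mem_drop (List.mem_toFinset.mp h))
    · rw [Finset.sum_union hdisj, List.sum_toFinset _ hdknd, List.map_id]
      simp only [hf]
      ring
  -- two key facts about collisions
  have hfact1 : ∀ k, ∀ P ∈ L.powersetCard 2, ∀ P' ∈ L.powersetCard 2,
      f (k, P) = f (k, P') → P = P' := by
    intro k P hP P' hP' hfe
    rw [Finset.mem_powersetCard] at hP hP'
    obtain ⟨p, q, hpq, rfl⟩ := Finset.card_eq_two.mp hP.2
    obtain ⟨p', q', hpq', rfl⟩ := Finset.card_eq_two.mp hP'.2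
    have hs : p + q = p' + q' := by
      have h1 : ({p, q} : Finset ℤ).sum id = p + q := Finset.sum_pair hpq
      have h2 : ({p', q'} : Finset ℤ).sum id = p' + q' := Finset.sum_pair hpq'
      simp only [hf] at hfe
      rw [h1, h2] at hfe
      linarith
    have := hsidon p (hLsub (hP.1 (Finset.mem_insert_self p {q}))) q
      (hLsub (hP.1 (Finset.mem_insert_of_mem (Finset.mem_singleton_self q)))) p'
      (hLsub (hP'.1 (Finset.mem_insert_self p' {q'}))) q'
      (hLsub (hP'.1 (Finset.mem_insert_of_mem (Finset.mem_singleton_self q')))) hs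
    rcases this with ⟨rfl, rfl⟩ | ⟨rfl, rfl⟩
    · rfl
    · exact Finset.pair_comm p q
  have hfact2 : ∀ k k', k' ≤ K → k + 2 ≤ k' → ∀ P ∈ L.powersetCard 2,
      ∀ P' ∈ L.powersetCard 2, f (k', P) = f (k, P') → False := by
    intro k k' hk'K hkk' P hP P' hP' hfe
    rw [Finset.mem_powersetCard] at hP hP'
    obtain ⟨p, q, hpq, rfl⟩ := Finset.card_eq_two.mp hP.2
    obtain ⟨p', q', hpq', rfl⟩ := Finset.card_eq_two.mp hP'.2
    have hpA : p ∈ A := hLsub (hP.1 (Finset.mem_insert_self p {q}))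
    have hqA : q ∈ A := hLsub (hP.1 (Finset.mem_insert_of_mem (Finset.mem_singleton_self q)))
    have hp't : p' ∈ t := hLt p' (hP'.1 (Finset.mem_insert_self p' {q'}))
    have hq't : q' ∈ t := hLt q' (hP'.1 (Finset.mem_insert_of_mem (Finset.mem_singleton_self q')))
    obtain ⟨j, hj⟩ : ∃ x, x = K - k' := ⟨_, rfl⟩
    obtain ⟨j2, hj2⟩ : ∃ x, x = K - k := ⟨_, rfl⟩
    have hjj : j + 2 ≤ j2 := by omega
    have hj2K : j2 ≤ K := by omega
    -- decompose the suffix sum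
    have hdec : (d.drop j).take (j2 - j) ++ d.drop j2 = d.drop j := by
      have h0 := List.take_append_drop (j2 - j) (d.drop j)
      rw [List.drop_drop (l := d)] at h0
      rwa [show j + (j2 - j) = j2 by omega] at h0
    have hlenmid : ((d.drop j).take (j2 - j)).length = j2 - j := by
      rw [List.length_take, List.length_drop]
      omega
    obtain ⟨e1, e2, rest, hmid⟩ : ∃ e1 e2 rest, (d.drop j).take (j2 - j) = e1 :: e2 :: rest := by
      obtain ⟨e1, tail, hE⟩ := List.exists_cons_of_ne_nil
        (l := (d.drop j).take (j2 - j)) (by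
          intro h0; rw [h0] at hlenmid; simp at hlenmid; omega)
      have h3 : 1 ≤ tail.length := by
        have h4 := hlenmid
        rw [hE] at h4
        simp at h4
        omega
      obtain ⟨e2, rest, hE2⟩ := List.exists_cons_of_ne_nil (l := tail) (by
        intro h0; rw [h0] at h3; simp at h3)
      exact ⟨e1, e2, rest, by rw [hE, hE2]⟩
    have hmidd : ∀ x ∈ (d.drop j).take (j2 - j), x ∈ d :=
      fun x hx => List.mem_of_mem_drop (List.mem_of_mem_take hx)
    have he1d : e1 ∈ d := hmidd e1 (by rw [hmid]; simp)
    have he2d : e2 ∈ d := hmidd e2 (by rw [hmid]; simp)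
    have hrest : 0 ≤ rest.sum := by
      apply List.sum_nonneg
      intro x hx
      exact le_of_lt (hpos x (hdA x (hmidd x (by rw [hmid]; simp [hx]))))
    have hsum : (d.drop j).sum = e1 + e2 + rest.sum + (d.drop j2).sum := by
      rw [← hdec, List.sum_append, hmid]
      simp
      ring
    have heq : p' + q' = e1 + e2 + rest.sum + (p + q) := by
      simp only [hf] at hfe
      rw [Finset.sum_pair hpq, Finset.sum_pair hpq'] at hfe
      simp only [id_eq] at hfe
      have : (d.drop (K - k')).sum = (d.drop j).sum := by rw [hj]
      rw [this, hsum] at hfe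
      have : (d.drop (K - k)).sum = (d.drop j2).sum := by rw [hj2]
      rw [this] at hfe
      linarith
    have h1 : p' < e1 := hlt p' hp't e1 he1d
    have h2 : q' < e2 := hlt q' hq't e2 he2d
    have h3 : 0 < p := hpos p hpA
    have h4 : 0 < q := hpos q hqA
    linarith
  -- the fibers of f on D have size at most 2
  have hfiber : ∀ v ∈ D.image f, (D.filter (fun x => f x = v)).card ≤ 2 := by
    intro v hv
    set F := D.filter (fun x => f x = v) with hF
    have hmemF : ∀ x ∈ F, (x.1 ∈ Finset.range (K + 1) ∧ x.2 ∈ L.powersetCard 2) ∧ f x = v := by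
      intro x hx
      have := Finset.mem_filter.mp hx
      exact ⟨Finset.mem_product.mp this.1, this.2⟩
    have hkgap : ∀ x ∈ F, ∀ y ∈ F, x.1 ≤ y.1 + 1 := by
      intro x hx y hy
      by_contra hcon
      push_neg at hcon
      obtain ⟨⟨hx1, hx2⟩, hxv⟩ := hmemF x hx
      obtain ⟨⟨hy1, hy2⟩, hyv⟩ := hmemF y hy
      have hx1' : x.1 ≤ K := by
        have := Finset.mem_range.mp hx1; omega
      exact hfact2 y.1 x.1 hx1' (by omega) x.2 hx2 y.2 hy2 (by
        rw [show (x.1, x.2) = x from rfl, show (y.1, y.2) = y from rfl, hxv, hyv])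
    have hinj : Set.InjOn Prod.fst (F : Set (ℕ × Finset ℤ)) := by
      intro x hx y hy hxy
      obtain ⟨⟨hx1, hx2⟩, hxv⟩ := hmemF x (Finset.mem_coe.mp hx)
      obtain ⟨⟨hy1, hy2⟩, hyv⟩ := hmemF y (Finset.mem_coe.mp hy)
      have h2 : x.2 = y.2 := by
        apply hfact1 x.1 x.2 hx2 y.2 hy2
        rw [show (x.1, x.2) = x from rfl, hxv]
        rw [show (x.1, y.2) = (y.1, y.2) from by rw [hxy], show (y.1, y.2) = y from rfl, hyv]
      exact Prod.ext hxy h2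
    have hcardF : F.card = (F.image Prod.fst).card := (Finset.card_image_of_injOn hinj).symm
    rw [hcardF]
    by_cases hFe : (F.image Prod.fst).Nonempty
    · set a := (F.image Prod.fst).min' hFe with ha
      have hsub : F.image Prod.fst ⊆ {a, a + 1} := by
        intro b hb
        have h1 : a ≤ b := Finset.min'_le _ _ hb
        have h2 : b ≤ a + 1 := by
          obtain ⟨x, hx, rfl⟩ := Finset.mem_image.mp hb
          obtain ⟨y, hy, hya⟩ := Finset.mem_image.mp (Finset.min'_mem _ hFe)
          have := hkgap x hx y hy
          omega
        simp only [Finset.mem_insert, Finset.mem_singleton]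
        omega
      calc (F.image Prod.fst).card ≤ ({a, a + 1} : Finset ℕ).card := Finset.card_le_card hsub
        _ ≤ 2 := by
          apply le_trans (Finset.card_insert_le a {a + 1})
          simp
    · rw [Finset.not_nonempty_iff_eq_empty.mp hFe]
      simp
  -- counting
  have h1 : D.card ≤ 2 * (D.image f).card := Finset.card_le_mul_card_image D 2 hfiber
  have h2 : (D.image f).card ≤ (restrictedSumset A).card := Finset.card_le_card himg
  have hDcard : D.card = (K + 1) * (m * (m - 1) / 2) := by
    rw [hD, Finset.card_product, Finset.card_range, Finset.card_powersetCard, hLcard,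
      Nat.choose_two_right]
  have hm2 : 2 ≤ m := by omega
  have heven : 2 ∣ m * (m - 1) := by
    have h0 : m - 1 + 1 = m := by omega
    have h := Nat.even_mul_succ_self (m - 1)
    rw [h0] at h
    rw [mul_comm]
    exact h.two_dvd
  have hcube : n ^ 3 ≤ 64 * ((K + 1) * (m * (m - 1))) := by
    obtain ⟨a, ha2⟩ : ∃ a, m = a + 2 := ⟨m - 2, by omega⟩
    have hm1 : m - 1 = a + 1 := by omega
    have hKb : m ≤ K + 1 := by omega
    calc n ^ 3 ≤ (2 * m + 1) ^ 3 := Nat.pow_le_pow_left (by omega) 3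
      _ ≤ 64 * (m * (m * (m - 1))) := by rw [hm1, ha2]; nlinarith [sq_nonneg a, a.zero_le]
      _ ≤ 64 * ((K + 1) * (m * (m - 1))) := by
          apply Nat.mul_le_mul_left
          exact Nat.mul_le_mul_right _ hKb
  have hDback : 128 * D.card = 64 * ((K + 1) * (m * (m - 1))) := by
    rw [hDcard]
    obtain ⟨c, hc⟩ := heven
    rw [hc]
    rw [Nat.mul_div_cancel_left c (by norm_num)]
    ring
  omega

/-- There is a constant `c > 0` such that every finite Sidon set of positive integers
satisfies `|Σ*A| ≥ c |A|³`. -/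
theorem sidon_restrictedSumset_cubic :
    ∃ c : ℝ, 0 < c ∧ ∀ A : Finset ℤ, (∀ a ∈ A, 0 < a) → IsSidonSet A →
      c * (A.card : ℝ) ^ 3 ≤ (restrictedSumset A).card := by
  refine ⟨1 / 256, by norm_num, fun A hpos hsidon => ?_⟩
  have h := sidon_key A hpos hsidon
  have h2 : ((A.card : ℝ)) ^ 3 ≤ 256 * ((restrictedSumset A).card : ℝ) := by
    exact_mod_cast h
  linarith
end

section
/- Let B and S be finite sets of integers with |S| = |B|, where S consists of integers and all elements of B are positive. Then the number of ordered pairs (s, b) ∈ S × B with s + b ∈ S is at most C(|B|, 2), and hence there exists b ∈ B such that |(S + b) \ S| ≥ |B|/2 (assuming |B| ≥ 1). -/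
open Finset

lemma card_lt_filter_product (S : Finset ℤ) :
    ((S ×ˢ S).filter (fun p => p.1 < p.2)).card = S.card.choose 2 := by
  have hswap : ((S ×ˢ S).filter (fun p => p.2 < p.1)).card
      = ((S ×ˢ S).filter (fun p => p.1 < p.2)).card := by
    apply Finset.card_bij (fun p _ => (p.2, p.1))
    · rintro ⟨a, b⟩ hp
      simp only [mem_filter, mem_product] at hp ⊢
      exact ⟨⟨hp.1.2, hp.1.1⟩, hp.2⟩
    · rintro ⟨a, b⟩ _ ⟨c, d⟩ _ h
      simpa [Prod.ext_iff, and_comm] using h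
    · rintro ⟨a, b⟩ hp
      simp only [mem_filter, mem_product] at hp
      exact ⟨(b, a), by simp [mem_filter, mem_product, hp.1.1, hp.1.2, hp.2], rfl⟩
  have hsplit : S.offDiag = (S ×ˢ S).filter (fun p => p.1 < p.2)
      ∪ (S ×ˢ S).filter (fun p => p.2 < p.1) := by
    ext ⟨a, b⟩
    simp only [mem_offDiag, mem_union, mem_filter, mem_product]
    constructor
    · rintro ⟨ha, hb, hne⟩
      rcases lt_or_gt_of_ne hne with h | h
      · exact Or.inl ⟨⟨ha, hb⟩, h⟩
      · exact Or.inr ⟨⟨ha, hb⟩, h⟩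
    · rintro (⟨⟨ha, hb⟩, h⟩ | ⟨⟨ha, hb⟩, h⟩) <;> exact ⟨ha, hb, by omega⟩
  have hdisj : Disjoint ((S ×ˢ S).filter (fun p => p.1 < p.2))
      ((S ×ˢ S).filter (fun p => p.2 < p.1)) := by
    rw [Finset.disjoint_left]
    rintro ⟨a, b⟩ h1 h2
    simp only [mem_filter] at h1 h2
    omega
  have h2 : 2 * ((S ×ˢ S).filter (fun p => p.1 < p.2)).card = S.card * S.card - S.card := by
    rw [← Finset.offDiag_card, hsplit, Finset.card_union_of_disjoint hdisj, hswap]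
    ring
  have hmul : S.card * S.card - S.card = S.card * (S.card - 1) := by
    rw [Nat.mul_sub, mul_one]
  rw [Nat.choose_two_right]
  omega

/-- Let `S`, `B` be finite sets of integers with `|S| = |B|` and all elements of `B`
positive. Then the number of pairs `(s, b) ∈ S × B` with `s + b ∈ S` is at most
`C(|B|, 2)`, and hence (if `B` is nonempty) some `b ∈ B` has `|(S + b) \ S| ≥ |B|/2`. -/
theorem escape_count (S B : Finset ℤ) (hB : ∀ b ∈ B, 0 < b) (hcard : S.card = B.card) :
    ((S ×ˢ B).filter (fun p => p.1 + p.2 ∈ S)).card ≤ B.card.choose 2 ∧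
      (1 ≤ B.card → ∃ b ∈ B, B.card ≤ 2 * (S.image (fun s => s + b) \ S).card) := by
  set T := (S ×ˢ B).filter (fun p => p.1 + p.2 ∈ S) with hT
  have part1 : T.card ≤ B.card.choose 2 := by
    rw [← hcard, ← card_lt_filter_product S]
    apply Finset.card_le_card_of_injOn (fun p => (p.1, p.1 + p.2))
    · rintro ⟨s, b⟩ hp
      change (s, b) ∈ (S ×ˢ B).filter (fun p => p.1 + p.2 ∈ S) at hp
      simp only [hT, mem_filter, mem_product] at hp
      have hb := hB b hp.1.2
      change (s, s + b) ∈ (S ×ˢ S).filter (fun p => p.1 < p.2)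
      simp only [mem_filter, mem_product]
      exact ⟨⟨hp.1.1, hp.2⟩, by omega⟩
    · rintro ⟨s, b⟩ _ ⟨s', b'⟩ _ h
      simp only [Prod.ext_iff] at h ⊢
      omega
  refine ⟨part1, fun hn => ?_⟩
  by_contra hcon
  push_neg at hcon
  -- each b in B has f b := (S.filter (· + b ∈ S)).card large
  have hsum : ∑ b ∈ B, (S.filter (fun s => s + b ∈ S)).card = T.card := by
    rw [hT]
    rw [Finset.card_filter, Finset.sum_product_right]
    congr 1; ext b; rw [Finset.card_filter]
  have key : ∀ b ∈ B, B.card + 1 ≤ 2 * (S.filter (fun s => s + b ∈ S)).card := by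
    intro b hb
    have hd := hcon b hb
    have himg : (S.image (fun s => s + b)).card = S.card :=
      Finset.card_image_of_injective _ (add_left_injective b)
    have hinter : ((S.image (fun s => s + b)) ∩ S).card
        = (S.filter (fun s => s + b ∈ S)).card := by
      have : (S.filter (fun s => s + b ∈ S)).image (fun s => s + b)
          = (S.image (fun s => s + b)) ∩ S := by
        ext x
        simp only [mem_image, mem_filter, mem_inter]
        constructor
        · rintro ⟨s, ⟨hs, hsb⟩, rfl⟩
          exact ⟨⟨s, hs, rfl⟩, hsb⟩
        · rintro ⟨⟨s, hs, rfl⟩, hx⟩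
          exact ⟨s, ⟨hs, hx⟩, rfl⟩
      rw [← this, Finset.card_image_of_injective _ (add_left_injective b)]
    have hsd := Finset.card_sdiff_add_card_inter (S.image (fun s => s + b)) S
    omega
  have hlb : B.card * (B.card + 1) ≤ 2 * T.card := by
    calc B.card * (B.card + 1) = ∑ _b ∈ B, (B.card + 1) := by
          rw [Finset.sum_const, smul_eq_mul]
      _ ≤ ∑ b ∈ B, 2 * (S.filter (fun s => s + b ∈ S)).card :=
          Finset.sum_le_sum key
      _ = 2 * T.card := by rw [← Finset.mul_sum, hsum]
  have hub : 2 * T.card ≤ B.card * (B.card - 1) := by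
    have := Nat.choose_two_right B.card
    have h2 : 2 ∣ B.card * (B.card - 1) := (Nat.even_mul_pred_self B.card).two_dvd
    omega
  have : B.card * (B.card + 1) ≤ B.card * (B.card - 1) := le_trans hlb hub
  have := Nat.le_of_mul_le_mul_left this (by omega : 0 < B.card)
  omega
end

section
/- Let k ≥ 1 and let b₁ < b₂ < ... < b_{2k} be positive integers, and m ≥ 1. Consider all multisets obtained by choosing elements from {b₁, ..., b_{2k}} with each element used at most m times and total multiplicity exactly mk. The set of attainable sums contains at least mk² + 1 distinct values; in particular, the sums range over at least mk² + 1 distinct integers between m(b₁ + ... + b_k) and m(b_{k+1} + ... + b_{2k}). -/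
def dcfg (k m u v r i : ℕ) : ℕ :=
  (if i + u + 1 < k then m
   else if i + u + 1 = k then m - 1 - v
   else if i + u + 1 = 2 * k then v
   else if 2 * k < i + u + 1 then m
   else 0) + (if i + u + 1 = k + r then 1 else 0)

def cfg (k m t i : ℕ) : ℕ :=
  if t < m * k * k then dcfg k m (t / k / m) (t / k % m) (t % k) i
  else if k ≤ i then m else 0

lemma dcfg_le (k m u v r i : ℕ) (hm : 1 ≤ m) (hv : v < m) (hr : r ≤ k) :
    dcfg k m u v r i ≤ m := by
  unfold dcfg; split_ifs <;> omega

lemma cfg_le (k m t i : ℕ) (hk : 1 ≤ k) (hm : 1 ≤ m) : cfg k m t i ≤ m := by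
  unfold cfg
  split_ifs with h1 h2
  · exact dcfg_le _ _ _ _ _ _ hm (Nat.mod_lt _ hm) (le_of_lt (Nat.mod_lt _ hk))
  · exact le_refl m
  · omega

lemma dcfg_move (k m u v r i : ℕ) :
    dcfg k m u v (r + 1) i + (if i + u + 1 = k + r then 1 else 0)
      = dcfg k m u v r i + (if i + u + 1 = k + r + 1 then 1 else 0) := by
  unfold dcfg; split_ifs <;> omega

lemma wrap1 (k m u v i : ℕ) (hk : 1 ≤ k) (hv : v + 1 < m) :
    dcfg k m u (v + 1) 0 i = dcfg k m u v k i := by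
  unfold dcfg; split_ifs <;> omega

lemma wrap2 (k m u i : ℕ) (hk : 1 ≤ k) (hm : 1 ≤ m) (hu : u + 1 < k) :
    dcfg k m (u + 1) 0 0 i = dcfg k m u (m - 1) k i := by
  unfold dcfg; split_ifs <;> omega

lemma wrap3 (k m i : ℕ) (hk : 1 ≤ k) (hm : 1 ≤ m) :
    (if k ≤ i then m else 0) = dcfg k m (k - 1) (m - 1) k i := by
  unfold dcfg; split_ifs <;> omega

lemma cfg_zero (k m i : ℕ) (hk : 1 ≤ k) (hm : 1 ≤ m) (hi : i < 2 * k) :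
    cfg k m 0 i = if i < k then m else 0 := by
  have h : 0 < m * k * k := by positivity
  unfold cfg
  rw [if_pos h]
  simp only [Nat.zero_div, Nat.zero_mod]
  unfold dcfg; split_ifs <;> omega

lemma cfg_step (k m t : ℕ) (hk : 1 ≤ k) (hm : 1 ≤ m) (ht : t < m * k * k) :
    ∃ p : ℕ, p + 1 < 2 * k ∧ ∀ i : ℕ,
      cfg k m (t + 1) i + (if i = p then 1 else 0)
        = cfg k m t i + (if i = p + 1 then 1 else 0) := by
  set j := t / k with hjdef
  set r := t % k with hrdef
  set u := j / m with hudef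
  set v := j % m with hvdef
  have hk0 : 0 < k := hk
  have hm0 : 0 < m := hm
  have hr : r < k := Nat.mod_lt _ hk0
  have hv : v < m := Nat.mod_lt _ hm0
  have htj : k * j + r = t := Nat.div_add_mod t k
  have hjuv : m * u + v = j := Nat.div_add_mod j m
  have hjlt : j < m * k := by
    by_contra h
    push_neg at h
    have h2 : k * (m * k) ≤ k * j := Nat.mul_le_mul_left k h
    have h3 : k * (m * k) = m * k * k := by ring
    linarith
  have hu : u < k := by
    by_contra h
    push_neg at h
    have h2 : m * k ≤ m * u := Nat.mul_le_mul_left m h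
    linarith
  have cfg_t : ∀ i, cfg k m t i = dcfg k m u v r i := by
    intro i; unfold cfg; rw [if_pos ht]
  have key : ∀ i, cfg k m (t + 1) i = dcfg k m u v (r + 1) i := by
    intro i
    by_cases hrk : r + 1 < k
    · have h1 : t + 1 = k * j + (r + 1) := by omega
      have ht1 : t + 1 < m * k * k := by
        have h4 : k * j + (r + 1) ≤ k * j + k := by omega
        have h5 : k * j + k = k * (j + 1) := by ring
        have h6 : k * (j + 1) ≤ k * (m * k) := Nat.mul_le_mul_left k hjlt
        have h7 : k * (m * k) = m * k * k := by ring
        have h8 : k * j + (r + 1) < k * (j + 1) := by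
          have : k * (j + 1) = k * j + k := by ring
          omega
        omega
      have hdiv : (t + 1) / k = j := by
        rw [h1, Nat.mul_add_div hk0, Nat.div_eq_of_lt hrk, Nat.add_zero]
      have hmod : (t + 1) % k = r + 1 := by
        rw [h1, Nat.mul_add_mod, Nat.mod_eq_of_lt hrk]
      unfold cfg
      rw [if_pos ht1, hdiv, hmod]
    · have hrk2 : r + 1 = k := by omega
      have h1 : t + 1 = k * (j + 1) := by
        have : k * (j + 1) = k * j + k := by ring
        omega
      have hdiv : (t + 1) / k = j + 1 := by
        rw [h1, Nat.mul_div_cancel_left _ hk0]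
      have hmod : (t + 1) % k = 0 := by rw [h1, Nat.mul_mod_right]
      by_cases hvm : v + 1 < m
      · have hj1 : j + 1 = m * u + (v + 1) := by omega
        have hjlt1 : j + 1 < m * k := by
          have h2 : m * (u + 1) ≤ m * k := Nat.mul_le_mul_left m hu
          have h3 : m * (u + 1) = m * u + m := by ring
          omega
        have ht1 : t + 1 < m * k * k := by
          have h2 : k * (j + 1) < k * (m * k) := (Nat.mul_lt_mul_left hk0).2 hjlt1
          have h3 : k * (m * k) = m * k * k := by ring
          omega
        have hdiv2 : (j + 1) / m = u := by
          rw [hj1, Nat.mul_add_div hm0, Nat.div_eq_of_lt hvm, Nat.add_zero]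
        have hmod2 : (j + 1) % m = v + 1 := by
          rw [hj1, Nat.mul_add_mod, Nat.mod_eq_of_lt hvm]
        unfold cfg
        rw [if_pos ht1, hdiv, hmod, hdiv2, hmod2, hrk2]
        exact wrap1 k m u v i hk hvm
      · have hvm2 : v + 1 = m := by omega
        have hj1 : j + 1 = m * (u + 1) := by
          have : m * (u + 1) = m * u + m := by ring
          omega
        by_cases huk : u + 1 < k
        · have hjlt1 : j + 1 < m * k := by
            rw [hj1]
            exact (Nat.mul_lt_mul_left hm0).2 huk
          have ht1 : t + 1 < m * k * k := by
            have h2 : k * (j + 1) < k * (m * k) := (Nat.mul_lt_mul_left hk0).2 hjlt1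
            have h3 : k * (m * k) = m * k * k := by ring
            omega
          have hdiv2 : (j + 1) / m = u + 1 := by
            rw [hj1, Nat.mul_div_cancel_left _ hm0]
          have hmod2 : (j + 1) % m = 0 := by rw [hj1, Nat.mul_mod_right]
          unfold cfg
          rw [if_pos ht1, hdiv, hmod, hdiv2, hmod2, hrk2]
          have hveq : v = m - 1 := by omega
          rw [hveq]
          exact wrap2 k m u i hk hm huk
        · have huk2 : u + 1 = k := by omega
          have ht1 : t + 1 = m * k * k := by
            rw [h1, hj1, huk2]; ring
          unfold cfg
          rw [if_neg (by omega)]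
          rw [hrk2]
          have hveq : v = m - 1 := by omega
          have hueq : u = k - 1 := by omega
          rw [hveq, hueq]
          exact wrap3 k m i hk hm
  clear_value v u r j
  refine ⟨k + r - (u + 1), by omega, fun i => ?_⟩
  rw [key i, cfg_t i]
  have e1 : (if i = k + r - (u + 1) then 1 else 0) = (if i + u + 1 = k + r then 1 else 0) := by
    split_ifs <;> omega
  have e2 : (if i = k + r - (u + 1) + 1 then 1 else 0)
      = (if i + u + 1 = k + r + 1 then 1 else 0) := by
    split_ifs <;> omega
  rw [e1, e2]
  exact dcfg_move k m u v r i

lemma sum_if_lt (k M : ℕ) :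
    (∑ i : Fin (2 * k), if (i : ℕ) < k then M else 0) = k * M := by
  rw [Fin.sum_univ_eq_sum_range (fun i => if i < k then M else 0) (2 * k)]
  rw [Finset.range_eq_Ico, ← Finset.sum_Ico_consecutive _ (Nat.zero_le k) (by omega : k ≤ 2 * k)]
  have h1 : ∑ i ∈ Finset.Ico 0 k, (if i < k then M else 0) = ∑ i ∈ Finset.Ico 0 k, M :=
    Finset.sum_congr rfl (fun i hi => if_pos (Finset.mem_Ico.1 hi).2)
  have h2 : ∑ i ∈ Finset.Ico k (2*k), (if i < k then M else 0) = 0 :=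
    Finset.sum_eq_zero (fun i hi => if_neg (by have := (Finset.mem_Ico.1 hi).1; omega))
  rw [h1, h2, Finset.sum_const, Nat.card_Ico]
  simp [Nat.mul_comm]

lemma delta_sum {M : Type*} [AddCommMonoid M] (n p : ℕ) (hp : p < n) (f : Fin n → M) :
    (∑ i : Fin n, if (i : ℕ) = p then f i else 0) = f ⟨p, hp⟩ := by
  have h : ∀ i : Fin n, (if (i : ℕ) = p then f i else 0) = (if i = ⟨p, hp⟩ then f i else 0) := by
    intro i
    simp only [Fin.ext_iff]
  rw [Finset.sum_congr rfl (fun i _ => h i), Finset.sum_ite_eq' Finset.univ (⟨p, hp⟩ : Fin n) f]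
  simp

lemma chain_step (k m : ℕ) (hk : 1 ≤ k) (hm : 1 ≤ m) (b : Fin (2 * k) → ℤ)
    (hmono : StrictMono b) (t : ℕ) (ht : t < m * k * k) :
    ((∑ i : Fin (2 * k), cfg k m (t + 1) i.1) = ∑ i : Fin (2 * k), cfg k m t i.1) ∧
    (∑ i : Fin (2 * k), (cfg k m t i.1 : ℤ) * b i)
      < ∑ i : Fin (2 * k), (cfg k m (t + 1) i.1 : ℤ) * b i := by
  obtain ⟨p, hp, hmove⟩ := cfg_step k m t hk hm ht
  constructor
  · have hsum : (∑ i : Fin (2 * k), (cfg k m (t + 1) i.1 + if (i : ℕ) = p then 1 else 0))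
        = ∑ i : Fin (2 * k), (cfg k m t i.1 + if (i : ℕ) = p + 1 then 1 else 0) :=
      Finset.sum_congr rfl (fun i _ => hmove i.1)
    rw [Finset.sum_add_distrib, Finset.sum_add_distrib,
      delta_sum _ p (by omega) (fun _ => 1), delta_sum _ (p + 1) hp (fun _ => 1)] at hsum
    omega
  · have hz : ∀ i : Fin (2 * k),
        ((cfg k m (t + 1) i.1 : ℤ) + if (i : ℕ) = p then 1 else 0) * b i
          = ((cfg k m t i.1 : ℤ) + if (i : ℕ) = p + 1 then 1 else 0) * b i := by
      intro i
      have h := congrArg (Nat.cast : ℕ → ℤ) (hmove i.1)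
      push_cast at h
      rw [h]
    have hzz : (∑ i : Fin (2 * k),
        ((cfg k m (t + 1) i.1 : ℤ) + if (i : ℕ) = p then 1 else 0) * b i)
        = ∑ i : Fin (2 * k),
        ((cfg k m t i.1 : ℤ) + if (i : ℕ) = p + 1 then 1 else 0) * b i :=
      Finset.sum_congr rfl (fun i _ => hz i)
    simp only [add_mul, ite_mul, one_mul, zero_mul] at hzz
    rw [Finset.sum_add_distrib, Finset.sum_add_distrib,
      delta_sum _ p (by omega) b, delta_sum _ (p + 1) hp b] at hzz
    have hb : b ⟨p, by omega⟩ < b ⟨p + 1, hp⟩ := hmono (by simp [Fin.mk_lt_mk])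
    linarith

lemma cfg_sum (k m : ℕ) (hk : 1 ≤ k) (hm : 1 ≤ m) (b : Fin (2 * k) → ℤ)
    (hmono : StrictMono b) :
    ∀ t, t ≤ m * k * k → (∑ i : Fin (2 * k), cfg k m t i.1) = m * k := by
  intro t
  induction t with
  | zero =>
    intro _
    have h0 : (∑ i : Fin (2 * k), cfg k m 0 i.1)
        = ∑ i : Fin (2 * k), (if (i : ℕ) < k then m else 0) :=
      Finset.sum_congr rfl (fun i _ => cfg_zero k m i.1 hk hm i.isLt)
    rw [h0, sum_if_lt, Nat.mul_comm]
  | succ n ih =>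
    intro hn
    rw [(chain_step k m hk hm b hmono n (by omega)).1]
    exact ih (by omega)

lemma chain_mono (k m : ℕ) (hk : 1 ≤ k) (hm : 1 ≤ m) (b : Fin (2 * k) → ℤ)
    (hmono : StrictMono b) :
    ∀ s t, s < t → t ≤ m * k * k →
      (∑ i : Fin (2 * k), (cfg k m s i.1 : ℤ) * b i)
        < ∑ i : Fin (2 * k), (cfg k m t i.1 : ℤ) * b i := by
  intro s t
  induction t with
  | zero => omega
  | succ n ih =>
    intro hst hn
    rcases Nat.lt_or_ge s n with h | h
    · exact lt_trans (ih h (by omega)) (chain_step k m hk hm b hmono n (by omega)).2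
    · have : s = n := by omega
      subst this
      exact (chain_step k m hk hm b hmono s (by omega)).2

/-- Let `b₁ < ⋯ < b_{2k}` be positive integers and `m ≥ 1`. Among all sums
`∑ cᵢ bᵢ` with `0 ≤ cᵢ ≤ m` and `∑ cᵢ = mk`, there are at least `mk² + 1` distinct values,
all lying between `m(b₁ + ⋯ + b_k)` and `m(b_{k+1} + ⋯ + b_{2k})`. -/
theorem multiplicity_sums (k m : ℕ) (hk : 1 ≤ k) (hm : 1 ≤ m) (b : Fin (2 * k) → ℤ)
    (hpos : ∀ i, 0 < b i) (hmono : StrictMono b) :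
    m * k ^ 2 + 1 ≤
      ((Finset.univ.filter
            (fun c : Fin (2 * k) → Fin (m + 1) => ∑ i, (c i : ℕ) = m * k)).image
          (fun c => ∑ i, ((c i : ℕ) : ℤ) * b i)).card ∧
    ∀ s ∈ (Finset.univ.filter
            (fun c : Fin (2 * k) → Fin (m + 1) => ∑ i, (c i : ℕ) = m * k)).image
          (fun c => ∑ i, ((c i : ℕ) : ℤ) * b i),
      (m : ℤ) * ∑ i ∈ Finset.univ.filter (fun i : Fin (2 * k) => (i : ℕ) < k), b i ≤ s ∧
      s ≤ (m : ℤ) * ∑ i ∈ Finset.univ.filter (fun i : Fin (2 * k) => k ≤ (i : ℕ)), b i := by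
  have hpow : m * k ^ 2 = m * k * k := by ring
  constructor
  · -- cardinality
    set S : ℕ → ℤ := fun t => ∑ i : Fin (2 * k), (cfg k m t i.1 : ℤ) * b i with hS
    have hsub : (Finset.range (m * k ^ 2 + 1)).image S ⊆
        (Finset.univ.filter
            (fun c : Fin (2 * k) → Fin (m + 1) => ∑ i, (c i : ℕ) = m * k)).image
          (fun c => ∑ i, ((c i : ℕ) : ℤ) * b i) := by
      intro s hs
      obtain ⟨t, ht, rfl⟩ := Finset.mem_image.1 hs
      rw [Finset.mem_range] at ht
      refine Finset.mem_image.2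
        ⟨fun i => ⟨cfg k m t i.1, Nat.lt_succ_of_le (cfg_le k m t i.1 hk hm)⟩,
          Finset.mem_filter.2 ⟨Finset.mem_univ _, ?_⟩, rfl⟩
      exact cfg_sum k m hk hm b hmono t (by omega)
    have hinj : Set.InjOn S (Finset.range (m * k ^ 2 + 1)) := by
      intro a ha c hc hac
      simp only [Finset.coe_range, Set.mem_Iio] at ha hc
      by_contra hne
      rcases Nat.lt_or_ge a c with h | h
      · exact absurd hac (ne_of_lt (chain_mono k m hk hm b hmono a c h (by omega)))
      · have h2 : c < a := by omega
        exact absurd hac.symm (ne_of_lt (chain_mono k m hk hm b hmono c a h2 (by omega)))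
    calc m * k ^ 2 + 1 = (Finset.range (m * k ^ 2 + 1)).card := (Finset.card_range _).symm
      _ = ((Finset.range (m * k ^ 2 + 1)).image S).card :=
          (Finset.card_image_of_injOn hinj).symm
      _ ≤ _ := Finset.card_le_card hsub
  · -- bounds
    intro s hs
    obtain ⟨c, hc, rfl⟩ := Finset.mem_image.1 hs
    have hcs : (∑ i, (c i : ℕ)) = m * k := (Finset.mem_filter.1 hc).2
    set A := Finset.univ.filter (fun i : Fin (2 * k) => (i : ℕ) < k) with hA
    set B := Finset.univ.filter (fun i : Fin (2 * k) => k ≤ (i : ℕ)) with hB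
    have hBnot : B = Finset.univ.filter (fun i : Fin (2 * k) => ¬ (i : ℕ) < k) := by
      apply Finset.filter_congr
      intro i _
      simp [Nat.not_lt]
    have hABsum : ∀ f : Fin (2 * k) → ℤ, (∑ i ∈ A, f i) + ∑ i ∈ B, f i = ∑ i, f i := by
      intro f
      rw [hBnot, hA, Finset.sum_filter_add_sum_filter_not]
    have hAcard : A.card = k := by
      rw [hA, Finset.card_filter]
      have : (∑ i : Fin (2 * k), if (i : ℕ) < k then 1 else 0) = k * 1 := sum_if_lt k 1
      omega
    have hBcard : B.card = k := by
      have h1 : A.card + B.card = (Finset.univ : Finset (Fin (2 * k))).card := by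
        rw [hBnot, hA]
        exact Finset.card_filter_add_card_filter_not
          (s := (Finset.univ : Finset (Fin (2 * k)))) (p := fun i => (i : ℕ) < k)
      rw [Finset.card_univ, Fintype.card_fin] at h1
      omega
    have hsplitN : (∑ i ∈ A, (c i : ℕ)) + ∑ i ∈ B, (c i : ℕ) = m * k := by
      rw [hBnot, hA, Finset.sum_filter_add_sum_filter_not]
      exact hcs
    have hsplitZ : (∑ i ∈ A, ((c i : ℕ) : ℤ)) + ∑ i ∈ B, ((c i : ℕ) : ℤ) = (m : ℤ) * k := by
      exact_mod_cast congrArg (Nat.cast : ℕ → ℤ) hsplitN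
    have hcle : ∀ i, ((c i : ℕ) : ℤ) ≤ (m : ℤ) := by
      intro i
      exact_mod_cast Nat.lt_succ_iff.mp (c i).isLt
    have hcpos : ∀ i, (0 : ℤ) ≤ ((c i : ℕ) : ℤ) := fun i => Int.natCast_nonneg _
    set κ₁ : Fin (2 * k) := ⟨k - 1, by omega⟩ with hκ₁
    set κ₂ : Fin (2 * k) := ⟨k, by omega⟩ with hκ₂
    constructor
    · -- lower bound
      have key : (∑ i ∈ A, ((m : ℤ) - (c i : ℕ)) * b i) ≤ ∑ i ∈ B, ((c i : ℕ) : ℤ) * b i := by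
        have hsumeq : (∑ i ∈ A, ((m : ℤ) - (c i : ℕ))) = ∑ i ∈ B, ((c i : ℕ) : ℤ) := by
          rw [Finset.sum_sub_distrib, Finset.sum_const, nsmul_eq_mul, hAcard]
          linarith
        calc (∑ i ∈ A, ((m : ℤ) - (c i : ℕ)) * b i)
            ≤ ∑ i ∈ A, ((m : ℤ) - (c i : ℕ)) * b κ₁ := by
              apply Finset.sum_le_sum
              intro i hi
              have hik : (i : ℕ) < k := (Finset.mem_filter.1 hi).2
              have hle : i ≤ κ₁ := by rw [Fin.le_def]; simp [hκ₁]; omega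
              exact mul_le_mul_of_nonneg_left (hmono.monotone hle)
                (by have := hcle i; linarith)
          _ = (∑ i ∈ A, ((m : ℤ) - (c i : ℕ))) * b κ₁ := (Finset.sum_mul _ _ _).symm
          _ = (∑ i ∈ B, ((c i : ℕ) : ℤ)) * b κ₁ := by rw [hsumeq]
          _ = ∑ i ∈ B, ((c i : ℕ) : ℤ) * b κ₁ := Finset.sum_mul _ _ _
          _ ≤ ∑ i ∈ B, ((c i : ℕ) : ℤ) * b i := by
              apply Finset.sum_le_sum
              intro i hi
              have hik : k ≤ (i : ℕ) := (Finset.mem_filter.1 hi).2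
              have hle : κ₁ ≤ i := by rw [Fin.le_def]; simp [hκ₁]; omega
              exact mul_le_mul_of_nonneg_left (hmono.monotone hle) (hcpos i)
      have expand : (m : ℤ) * ∑ i ∈ A, b i
          = (∑ i ∈ A, ((m : ℤ) - (c i : ℕ)) * b i) + ∑ i ∈ A, ((c i : ℕ) : ℤ) * b i := by
        rw [Finset.mul_sum, ← Finset.sum_add_distrib]
        apply Finset.sum_congr rfl
        intro i _
        ring
      have htotal := hABsum (fun i => ((c i : ℕ) : ℤ) * b i)
      beta_reduce at htotal
      rw [← htotal]
      linarith
    · -- upper bound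
      have key : (∑ i ∈ A, ((c i : ℕ) : ℤ) * b i) ≤ ∑ i ∈ B, ((m : ℤ) - (c i : ℕ)) * b i := by
        have hsumeq : (∑ i ∈ B, ((m : ℤ) - (c i : ℕ))) = ∑ i ∈ A, ((c i : ℕ) : ℤ) := by
          rw [Finset.sum_sub_distrib, Finset.sum_const, nsmul_eq_mul, hBcard]
          linarith
        calc (∑ i ∈ A, ((c i : ℕ) : ℤ) * b i)
            ≤ ∑ i ∈ A, ((c i : ℕ) : ℤ) * b κ₂ := by
              apply Finset.sum_le_sum
              intro i hi
              have hik : (i : ℕ) < k := (Finset.mem_filter.1 hi).2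
              have hle : i ≤ κ₂ := by rw [Fin.le_def]; simp [hκ₂]; omega
              exact mul_le_mul_of_nonneg_left (hmono.monotone hle) (hcpos i)
          _ = (∑ i ∈ A, ((c i : ℕ) : ℤ)) * b κ₂ := (Finset.sum_mul _ _ _).symm
          _ = (∑ i ∈ B, ((m : ℤ) - (c i : ℕ))) * b κ₂ := by rw [hsumeq]
          _ = ∑ i ∈ B, ((m : ℤ) - (c i : ℕ)) * b κ₂ := Finset.sum_mul _ _ _
          _ ≤ ∑ i ∈ B, ((m : ℤ) - (c i : ℕ)) * b i := by
              apply Finset.sum_le_sum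
              intro i hi
              have hik : k ≤ (i : ℕ) := (Finset.mem_filter.1 hi).2
              have hle : κ₂ ≤ i := by rw [Fin.le_def]; simp [hκ₂]; omega
              exact mul_le_mul_of_nonneg_left (hmono.monotone hle)
                (by have := hcle i; linarith)
      have expand : (m : ℤ) * ∑ i ∈ B, b i
          = (∑ i ∈ B, ((m : ℤ) - (c i : ℕ)) * b i) + ∑ i ∈ B, ((c i : ℕ) : ℤ) * b i := by
        rw [Finset.mul_sum, ← Finset.sum_add_distrib]
        apply Finset.sum_congr rfl
        intro i _
        ring
      have htotal := hABsum (fun i => ((c i : ℕ) : ℤ) * b i)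
      beta_reduce at htotal
      rw [← htotal]
      linarith
end
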